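/- The net system of the synchronization pattern with n clients weakly terminates: from every marking reachable from the initial marking {i} + Σ_{j=1..n} {i_j}, the final marking {i} + Σ_{j=1..n} {r_j} is reachable. -/
import Mathlib


namespace PortNets

/-- Direction of communication of a transition: send, receive, or internal (τ). -/
inductive Dir : Type
  | send | receive | tau
deriving DecidableEq

/-- Preset of a node `x` with respect to a flow relation `F`. -/
def pre {Node : Type} (F : Set (Node × Node)) (x : Node) : Set Node := {y | (y, x) ∈ F}

/-- Postset of a node `x` with respect to a flow relation `F`. -/
def post {Node : Type} (F : Set (Node × Node)) (x : Node) : Set Node := {y | (x, y) ∈ F}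

/-- Raw data of an open Petri net (with labels): internal places `P`, input places `I`,
output places `O`, transitions `T`, flow `F`, initial and final places, labeling `μ`. -/
structure OPN (Node L : Type) where
  P : Set Node
  I : Set Node
  O : Set Node
  T : Set Node
  F : Set (Node × Node)
  init : Set Node
  fin : Set Node
  μ : Node → L

variable {Node L : Type}

/-- All places of an OPN. -/
def OPN.places (N : OPN Node L) : Set Node := N.P ∪ N.I ∪ N.O

/-- All nodes of an OPN. -/
def OPN.nodes (N : OPN Node L) : Set Node := N.places ∪ N.T

/-- Structural requirements of an open Petri net. -/
structure IsOPN (N : OPN Node L) : Prop where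
  disjPI : N.P ∩ N.I = ∅
  disjPO : N.P ∩ N.O = ∅
  disjIO : N.I ∩ N.O = ∅
  disjPT : N.places ∩ N.T = ∅
  flow_sub : N.F ⊆ (N.places ×ˢ N.T) ∪ (N.T ×ˢ N.places)
  no_pre_I : ∀ x ∈ N.I, pre N.F x = ∅
  no_post_O : ∀ x ∈ N.O, post N.F x = ∅
  not_both : ∀ t ∈ N.T, ¬((pre N.F t ∩ N.I).Nonempty ∧ (post N.F t ∩ N.O).Nonempty)
  init_sub : N.init ⊆ N.P
  fin_sub : N.fin ⊆ N.P

open Classical in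
noncomputable def dir (N : OPN Node L) (t : Node) : Dir :=
  if (post N.F t ∩ N.O).Nonempty then Dir.send
  else if (pre N.F t ∩ N.I).Nonempty then Dir.receive
  else Dir.tau

open Classical in
noncomputable def fireAt (F : Set (Node × Node)) (m : Node → ℕ) (t : Node) : Node → ℕ :=
  fun p => m p - (if (p, t) ∈ F then 1 else 0) + (if (t, p) ∈ F then 1 else 0)

/-- `Fires T F m t m'`: transition `t` is enabled in marking `m` and firing it yields `m'`. -/
def Fires (T : Set Node) (F : Set (Node × Node)) (m : Node → ℕ) (t : Node)
    (m' : Node → ℕ) : Prop :=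
  t ∈ T ∧ (∀ p, (p, t) ∈ F → 1 ≤ m p) ∧ m' = fireAt F m t

/-- Firing a finite sequence of transitions. -/
inductive FireSeq (T : Set Node) (F : Set (Node × Node)) :
    (Node → ℕ) → List Node → (Node → ℕ) → Prop
  | nil (m : Node → ℕ) : FireSeq T F m [] m
  | cons {m m' m'' : Node → ℕ} {t : Node} {σ : List Node} :
      Fires T F m t m' → FireSeq T F m' σ m'' → FireSeq T F m (t :: σ) m''

/-- Reachability of markings. -/
def Reach (T : Set Node) (F : Set (Node × Node)) (m m' : Node → ℕ) : Prop :=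
  ∃ σ : List Node, FireSeq T F m σ m'

/-- Weak termination: from every marking reachable from `m0`, the marking `mf` is reachable. -/
def WeaklyTerminates (T : Set Node) (F : Set (Node × Node)) (m0 mf : Node → ℕ) : Prop :=
  ∀ m, Reach T F m0 m → Reach T F m mf

/-- The marking putting one token on each element of a set of places. -/
noncomputable def mark (s : Set Node) : Node → ℕ := s.indicator fun _ => 1

/-- Flow relation of the skeleton: all arcs not adjacent to interface places. -/
def skF (N : OPN Node L) : Set (Node × Node) :=
  {x ∈ N.F | x.1 ∉ N.I ∪ N.O ∧ x.2 ∉ N.I ∪ N.O}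

/-- The skeleton is a state machine: each transition has at most one place in its
preset and at most one in its postset. -/
def IsSM (N : OPN Node L) : Prop :=
  ∀ t ∈ N.T, (pre (skF N) t).Subsingleton ∧ (post (skF N) t).Subsingleton

/-- `x` lies on a path from `i` to `f` w.r.t. flow `F`. -/
def OnPath (F : Set (Node × Node)) (i f x : Node) : Prop :=
  ∃ l : List Node, l ≠ [] ∧ List.Chain' (fun a b => (a, b) ∈ F) l ∧
    l.head? = some i ∧ l.getLast? = some f ∧ x ∈ l

/-- Workflow net (with places `P`, transitions `T`, flow `F`): `i` is the unique place with
empty preset, `f` the unique place with empty postset, and every node is on a path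
from `i` to `f`. -/
def IsWFNOn (P T : Set Node) (F : Set (Node × Node)) (i f : Node) : Prop :=
  i ∈ P ∧ f ∈ P ∧ pre F i = ∅ ∧ post F f = ∅ ∧
    (∀ p ∈ P, pre F p = ∅ → p = i) ∧
    (∀ p ∈ P, post F p = ∅ → p = f) ∧
    (∀ x ∈ P ∪ T, OnPath F i f x)

/-- Transition `t` is connected (by an arc, in either direction) to node `x`. -/
def connected (N : OPN Node L) (t x : Node) : Prop := (x, t) ∈ N.F ∨ (t, x) ∈ N.F

/-- A labeled portnet: an OPN whose skeleton is a state-machine workflow net, with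
singleton `init` and `fin`, every transition connected to exactly one interface place,
transitions sharing an interface place sharing a label, and transitions sharing a
label sharing their interface place connections. -/
structure IsPortnet (N : OPN Node L) : Prop where
  isOPN : IsOPN N
  isSM : IsSM N
  init_single : ∃ i, N.init = {i}
  fin_single : ∃ f, N.fin = {f}
  isWFN : ∀ i f, N.init = {i} → N.fin = {f} → IsWFNOn N.P N.T (skF N) i f
  one_iface : ∀ t ∈ N.T, ∃! x, x ∈ N.I ∪ N.O ∧ connected N t x
  same_iface_label : ∀ x ∈ N.I ∪ N.O, ∀ t t', t ∈ N.T → t' ∈ N.T →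
    connected N t x → connected N t' x → N.μ t = N.μ t'
  same_label_iface : ∀ t ∈ N.T, ∀ t' ∈ N.T, N.μ t = N.μ t' →
    ∀ x ∈ N.I ∪ N.O, (connected N t x ↔ connected N t' x)

/-- Observable choices: distinct transitions in the postset of a place have distinct labels. -/
def ObservableChoices (N : OPN Node L) : Prop :=
  ∀ p ∈ N.P, ∀ t ∈ post N.F p, ∀ t' ∈ post N.F p, t ≠ t' → N.μ t ≠ N.μ t'

/-- Choice property: all transitions in the postset of a place have the same direction. -/
def ChoiceProp (N : OPN Node L) : Prop :=
  ∀ p ∈ N.P, ∀ t ∈ post N.F p, ∀ t' ∈ post N.F p, dir N t = dir N t'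

/-- Diamond property. -/
def DiamondProp (N : OPN Node L) : Prop :=
  ∀ p ∈ N.P, ∀ t ∈ post N.F p, ∀ t' ∈ post N.F p, dir N t ≠ dir N t' →
    ∀ q ∈ post (skF N) t, ∀ q' ∈ post (skF N) t',
      ∃ u ∈ post (skF N) q, ∃ u' ∈ post (skF N) q',
        (post (skF N) u ∩ post (skF N) u').Nonempty ∧
        N.μ t = N.μ u' ∧ N.μ t' = N.μ u

/-- Loop property. -/
def LoopProp (N : OPN Node L) : Prop :=
  ∀ p ∈ N.P, ∀ t ∈ post N.F p, ∀ t' ∈ post N.F p, t ≠ t' → dir N t = dir N t' →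
    ∀ (l : List Node) (t'' : Node),
      List.Chain' (fun a b => (a, b) ∈ N.F) (p :: t :: (l ++ [t''])) →
      t'' ∈ N.T → N.μ t'' = N.μ t' →
      (∀ u ∈ l, u ∈ N.T → N.μ u ≠ N.μ t') →
      ∃ v ∈ t :: (l ++ [t'']), v ∈ N.T ∧ dir N v ≠ dir N t

/-- Well-formed labeled portnet. -/
def WellFormed (N : OPN Node L) : Prop :=
  IsPortnet N ∧ ObservableChoices N ∧ DiamondProp N ∧ LoopProp N

/-- `(M, φ)` is a partial mirror of the labeled portnet `N`. -/
structure IsPartialMirror (N M : OPN Node L) (φ : Node → Node) : Prop where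
  portN : IsPortnet N
  portM : IsPortnet M
  inj : Set.InjOn φ M.nodes
  mapsP : ∀ x ∈ M.P, φ x ∈ N.P
  mapsT : ∀ x ∈ M.T, φ x ∈ N.T
  mapsI : ∀ x ∈ M.I, φ x ∈ N.O
  mapsO : ∀ x ∈ M.O, φ x ∈ N.I
  flow_same : ∀ x y, (x, y) ∈ M.F → x ∉ M.I → y ∉ M.O → (φ x, φ y) ∈ N.F
  flow_rev : ∀ x y, (x, y) ∈ M.F → (x ∈ M.I ∨ y ∈ M.O) → (φ y, φ x) ∈ N.F
  init_eq : φ '' M.init = N.init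
  fin_eq : φ '' M.fin = N.fin
  lab : ∀ t ∈ M.T, M.μ t = N.μ (φ t)
  send_cover : ∀ p ∈ M.P, ∀ t, (φ p, t) ∈ N.F → dir N t = Dir.send →
    ∃ t', (p, t') ∈ M.F ∧ φ t' = t

/-- Composability of two OPNs. -/
def Composable (N M : OPN Node L) : Prop :=
  (N.nodes ∩ M.nodes = (N.I ∪ N.O) ∩ (M.I ∪ M.O)) ∧
  (((N.I ∩ M.O) ∪ (M.I ∩ N.O)).Nonempty →
    N.O ⊆ M.I ∧ M.O ⊆ N.I ∧ N.I ∩ M.I = ∅ ∧ N.O ∩ M.O = ∅)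

open Classical in
noncomputable def compose2 (N M : OPN Node L) : OPN Node L where
  P := N.P ∪ M.P ∪ ((N.I ∪ M.I) ∩ (N.O ∪ M.O))
  I := (N.I ∪ M.I) \ (N.O ∪ M.O)
  O := (N.O ∪ M.O) \ (N.I ∪ M.I)
  T := N.T ∪ M.T
  F := N.F ∪ M.F
  init := N.init ∪ M.init
  fin := N.fin ∪ M.fin
  μ := fun x => if x ∈ N.T then N.μ x else M.μ x

end PortNets

namespace PortNets

/-- Nodes of the synchronization pattern net with `n` clients: server places
`pi, pp, pq, pr`, interface places `pa1, pa2, pa3`, client places `pic j, ppc j, pqc j,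
prc j`, server transitions `tu, tv, tw, tt`, and client transitions `tuc j, tvc j, twc j`. -/
inductive SPNode (n : ℕ) : Type
  | pi | pp | pq | pr
  | pa1 | pa2 | pa3
  | pic (j : Fin n) | ppc (j : Fin n) | pqc (j : Fin n) | prc (j : Fin n)
  | tu | tv | tw | tt
  | tuc (j : Fin n) | tvc (j : Fin n) | twc (j : Fin n)
deriving DecidableEq

/-- Transitions of the synchronization pattern net. -/
def spT (n : ℕ) : Set (SPNode n) :=
  {x | x = SPNode.tu ∨ x = SPNode.tv ∨ x = SPNode.tw ∨ x = SPNode.tt ∨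
       ∃ j, x = SPNode.tuc j ∨ x = SPNode.tvc j ∨ x = SPNode.twc j}

/-- Flow relation of the synchronization pattern net: `•u = {i, a1}`, `u• = {p}`;
`•v = {p}`, `v• = {q, a2}`; `•w = {q, a3}`, `w• = {r}`; `•t = {r}`, `t• = {i}`;
`•u_j = {i_j}`, `u_j• = {p_j, a1}`; `•v_j = {p_j, a2}`, `v_j• = {q_j}`;
`•w_j = {q_j}`, `w_j• = {r_j, a3}`. -/
def spF (n : ℕ) : Set (SPNode n × SPNode n) :=
  {x | x = (SPNode.pi, SPNode.tu) ∨ x = (SPNode.pa1, SPNode.tu) ∨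
       x = (SPNode.tu, SPNode.pp) ∨
       x = (SPNode.pp, SPNode.tv) ∨ x = (SPNode.tv, SPNode.pq) ∨
       x = (SPNode.tv, SPNode.pa2) ∨
       x = (SPNode.pq, SPNode.tw) ∨ x = (SPNode.pa3, SPNode.tw) ∨
       x = (SPNode.tw, SPNode.pr) ∨
       x = (SPNode.pr, SPNode.tt) ∨ x = (SPNode.tt, SPNode.pi) ∨
       ∃ j, x = (SPNode.pic j, SPNode.tuc j) ∨ x = (SPNode.tuc j, SPNode.ppc j) ∨
            x = (SPNode.tuc j, SPNode.pa1) ∨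
            x = (SPNode.ppc j, SPNode.tvc j) ∨ x = (SPNode.pa2, SPNode.tvc j) ∨
            x = (SPNode.tvc j, SPNode.pqc j) ∨
            x = (SPNode.pqc j, SPNode.twc j) ∨ x = (SPNode.twc j, SPNode.prc j) ∨
            x = (SPNode.twc j, SPNode.pa3)}

/-- Initial marking `{i} + Σ_j {i_j}` of the synchronization pattern net. -/
noncomputable def spM0 (n : ℕ) : SPNode n → ℕ :=
  mark ({SPNode.pi} ∪ Set.range SPNode.pic)

/-- Final marking `{i} + Σ_j {r_j}` of the synchronization pattern net. -/
noncomputable def spMf (n : ℕ) : SPNode n → ℕ :=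
  mark ({SPNode.pi} ∪ Set.range SPNode.prc)

/-- The five place invariants of the synchronization pattern (Lemma on place invariants);
the fifth equation is over the integers. -/
def SPInv (n : ℕ) (m : SPNode n → ℕ) : Prop :=
  (m SPNode.pi + m SPNode.pp + m SPNode.pq + m SPNode.pr = 1) ∧
  (∀ j : Fin n, m (SPNode.pic j) + m (SPNode.ppc j) + m (SPNode.pqc j) + m (SPNode.prc j) = 1) ∧
  (∑ j : Fin n, m (SPNode.ppc j) = m SPNode.pa1 + m SPNode.pp + m SPNode.pa2) ∧
  ((∑ j : Fin n, m (SPNode.pqc j)) + m SPNode.pa2 ≤ 1) ∧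
  (m SPNode.pa2 + m SPNode.pa3 ≤ 1 ∧
    (m SPNode.pa2 : ℤ) + (m SPNode.pa3 : ℤ) =
      (m SPNode.pq : ℤ) - ∑ j : Fin n, (m (SPNode.pqc j) : ℤ))

end PortNets

namespace PortNets

/-! ### Auxiliary lemmas for the proof -/

variable {n : ℕ}

section PrePost

lemma pre_tu (p : SPNode n) : (p, SPNode.tu) ∈ spF n ↔ p = SPNode.pi ∨ p = SPNode.pa1 := by
  simp [spF, Prod.ext_iff]

lemma post_tu (p : SPNode n) : (SPNode.tu, p) ∈ spF n ↔ p = SPNode.pp := by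
  simp [spF, Prod.ext_iff]

lemma pre_tv (p : SPNode n) : (p, SPNode.tv) ∈ spF n ↔ p = SPNode.pp := by
  simp [spF, Prod.ext_iff]

lemma post_tv (p : SPNode n) : (SPNode.tv, p) ∈ spF n ↔ p = SPNode.pq ∨ p = SPNode.pa2 := by
  simp [spF, Prod.ext_iff]

lemma pre_tw (p : SPNode n) : (p, SPNode.tw) ∈ spF n ↔ p = SPNode.pq ∨ p = SPNode.pa3 := by
  simp [spF, Prod.ext_iff]

lemma post_tw (p : SPNode n) : (SPNode.tw, p) ∈ spF n ↔ p = SPNode.pr := by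
  simp [spF, Prod.ext_iff]

lemma pre_tt (p : SPNode n) : (p, SPNode.tt) ∈ spF n ↔ p = SPNode.pr := by
  simp [spF, Prod.ext_iff]

lemma post_tt (p : SPNode n) : (SPNode.tt, p) ∈ spF n ↔ p = SPNode.pi := by
  simp [spF, Prod.ext_iff]

lemma pre_tuc (j0 : Fin n) (p : SPNode n) :
    (p, SPNode.tuc j0) ∈ spF n ↔ p = SPNode.pic j0 := by
  simp [spF, Prod.ext_iff]

lemma post_tuc (j0 : Fin n) (p : SPNode n) :
    (SPNode.tuc j0, p) ∈ spF n ↔ p = SPNode.ppc j0 ∨ p = SPNode.pa1 := by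
  constructor
  · intro h
    simp only [spF, Prod.ext_iff, Set.mem_setOf_eq] at h
    rcases h with h | h | h | h | h | h | h | h | h | h | h | ⟨j, h⟩ <;> aesop
  · rintro (rfl | rfl) <;>
      · simp only [spF, Set.mem_setOf_eq]
        exact Or.inr <| Or.inr <| Or.inr <| Or.inr <| Or.inr <| Or.inr <| Or.inr <| Or.inr <|
          Or.inr <| Or.inr <| Or.inr ⟨j0, by simp⟩

lemma pre_tvc (j0 : Fin n) (p : SPNode n) :
    (p, SPNode.tvc j0) ∈ spF n ↔ p = SPNode.ppc j0 ∨ p = SPNode.pa2 := by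
  constructor
  · intro h
    simp only [spF, Prod.ext_iff, Set.mem_setOf_eq] at h
    rcases h with h | h | h | h | h | h | h | h | h | h | h | ⟨j, h⟩ <;> aesop
  · rintro (rfl | rfl) <;>
      · simp only [spF, Set.mem_setOf_eq]
        exact Or.inr <| Or.inr <| Or.inr <| Or.inr <| Or.inr <| Or.inr <| Or.inr <| Or.inr <|
          Or.inr <| Or.inr <| Or.inr ⟨j0, by simp⟩

lemma post_tvc (j0 : Fin n) (p : SPNode n) :
    (SPNode.tvc j0, p) ∈ spF n ↔ p = SPNode.pqc j0 := by
  simp [spF, Prod.ext_iff]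

lemma pre_twc (j0 : Fin n) (p : SPNode n) :
    (p, SPNode.twc j0) ∈ spF n ↔ p = SPNode.pqc j0 := by
  simp [spF, Prod.ext_iff]

lemma post_twc (j0 : Fin n) (p : SPNode n) :
    (SPNode.twc j0, p) ∈ spF n ↔ p = SPNode.prc j0 ∨ p = SPNode.pa3 := by
  constructor
  · intro h
    simp only [spF, Prod.ext_iff, Set.mem_setOf_eq] at h
    rcases h with h | h | h | h | h | h | h | h | h | h | h | ⟨j, h⟩ <;> aesop
  · rintro (rfl | rfl) <;>
      · simp only [spF, Set.mem_setOf_eq]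
        exact Or.inr <| Or.inr <| Or.inr <| Or.inr <| Or.inr <| Or.inr <| Or.inr <| Or.inr <|
          Or.inr <| Or.inr <| Or.inr ⟨j0, by simp⟩

end PrePost
lemma sum_eq_of_ne {M : Type*} [AddCommMonoid M] {n : ℕ} (f g : Fin n → M) (j0 : Fin n)
    (h : ∀ j, j ≠ j0 → f j = g j) (a b : M) (ha : f j0 = a) (hb : g j0 = b) :
    ∃ S, (∑ j, f j) = a + S ∧ (∑ j, g j) = b + S := by
  classical
  refine ⟨∑ j ∈ Finset.univ.erase j0, g j, ?_, ?_⟩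
  · rw [← Finset.add_sum_erase _ f (Finset.mem_univ j0), ha]
    exact congrArg _ (Finset.sum_congr rfl fun j hj => h j (Finset.mem_erase.1 hj).1)
  · rw [← Finset.add_sum_erase _ g (Finset.mem_univ j0), hb]

lemma inv_fires {m m' : SPNode n → ℕ} {t : SPNode n}
    (hf : Fires (spT n) (spF n) m t m') (hI : SPInv n m) : SPInv n m' := by
  obtain ⟨h1, h2, h3, h4, h5, h6⟩ := hI
  obtain ⟨ht, hen, rfl⟩ := hf
  have hcast : ((∑ j, m (SPNode.pqc j) : ℕ) : ℤ) = ∑ j, (m (SPNode.pqc j) : ℤ) := by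
    push_cast; rfl
  simp only [spT, Set.mem_setOf_eq] at ht
  rcases ht with rfl | rfl | rfl | rfl | ⟨j0, rfl | rfl | rfl⟩
  · -- tu
    have e1 : 1 ≤ m SPNode.pi := hen _ ((pre_tu _).mpr (Or.inl rfl))
    have e2 : 1 ≤ m SPNode.pa1 := hen _ ((pre_tu _).mpr (Or.inr rfl))
    refine ⟨?_, fun j => ?_, ?_, ?_, ?_, ?_⟩
    · simp [fireAt, pre_tu, post_tu]; omega
    · have hj := h2 j; simp [fireAt, pre_tu, post_tu]; omega
    · simp [fireAt, pre_tu, post_tu]; omega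
    · simp [fireAt, pre_tu, post_tu]; omega
    · simp [fireAt, pre_tu, post_tu]; omega
    · simp [fireAt, pre_tu, post_tu]; omega
  · -- tv
    have e1 : 1 ≤ m SPNode.pp := hen _ ((pre_tv _).mpr rfl)
    refine ⟨?_, fun j => ?_, ?_, ?_, ?_, ?_⟩
    · simp [fireAt, pre_tv, post_tv]; omega
    · have hj := h2 j; simp [fireAt, pre_tv, post_tv]; omega
    · simp [fireAt, pre_tv, post_tv]; omega
    · simp [fireAt, pre_tv, post_tv]; omega
    · simp [fireAt, pre_tv, post_tv]; omega
    · simp [fireAt, pre_tv, post_tv]; omega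
  · -- tw
    have e1 : 1 ≤ m SPNode.pq := hen _ ((pre_tw _).mpr (Or.inl rfl))
    have e2 : 1 ≤ m SPNode.pa3 := hen _ ((pre_tw _).mpr (Or.inr rfl))
    refine ⟨?_, fun j => ?_, ?_, ?_, ?_, ?_⟩
    · simp [fireAt, pre_tw, post_tw]; omega
    · have hj := h2 j; simp [fireAt, pre_tw, post_tw]; omega
    · simp [fireAt, pre_tw, post_tw]; omega
    · simp [fireAt, pre_tw, post_tw]; omega
    · simp [fireAt, pre_tw, post_tw]; omega
    · simp [fireAt, pre_tw, post_tw]; omega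
  · -- tt
    have e1 : 1 ≤ m SPNode.pr := hen _ ((pre_tt _).mpr rfl)
    refine ⟨?_, fun j => ?_, ?_, ?_, ?_, ?_⟩
    · simp [fireAt, pre_tt, post_tt]; omega
    · have hj := h2 j; simp [fireAt, pre_tt, post_tt]; omega
    · simp [fireAt, pre_tt, post_tt]; omega
    · simp [fireAt, pre_tt, post_tt]; omega
    · simp [fireAt, pre_tt, post_tt]; omega
    · simp [fireAt, pre_tt, post_tt]; omega
  · -- tuc j0
    have e1 : 1 ≤ m (SPNode.pic j0) := hen _ ((pre_tuc j0 _).mpr rfl)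
    obtain ⟨S, hS1, hS2⟩ := sum_eq_of_ne
      (fun j => fireAt (spF n) m (SPNode.tuc j0) (SPNode.ppc j))
      (fun j => m (SPNode.ppc j)) j0
      (fun j hj => by simp [fireAt, pre_tuc, post_tuc, hj, Ne.symm hj])
      (m (SPNode.ppc j0) + 1) (m (SPNode.ppc j0))
      (by simp [fireAt, pre_tuc, post_tuc]) rfl
    refine ⟨?_, fun j => ?_, ?_, ?_, ?_, ?_⟩
    · simp [fireAt, pre_tuc, post_tuc]; omega
    · have hj := h2 j
      by_cases hc : j = j0
      · subst hc; simp [fireAt, pre_tuc, post_tuc]; omega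
      · simp [fireAt, pre_tuc, post_tuc, hc, Ne.symm hc]; omega
    · rw [hS1]; simp [fireAt, pre_tuc, post_tuc]; omega
    · simp [fireAt, pre_tuc, post_tuc]; omega
    · simp [fireAt, pre_tuc, post_tuc]; omega
    · simp [fireAt, pre_tuc, post_tuc]; omega
  · -- tvc j0
    have e1 : 1 ≤ m (SPNode.ppc j0) := hen _ ((pre_tvc j0 _).mpr (Or.inl rfl))
    have e2 : 1 ≤ m SPNode.pa2 := hen _ ((pre_tvc j0 _).mpr (Or.inr rfl))
    obtain ⟨S, hS1, hS2⟩ := sum_eq_of_ne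
      (fun j => fireAt (spF n) m (SPNode.tvc j0) (SPNode.ppc j))
      (fun j => m (SPNode.ppc j)) j0
      (fun j hj => by simp [fireAt, pre_tvc, post_tvc, hj, Ne.symm hj])
      (m (SPNode.ppc j0) - 1) (m (SPNode.ppc j0))
      (by simp [fireAt, pre_tvc, post_tvc]) rfl
    obtain ⟨S2, hT1, hT2⟩ := sum_eq_of_ne
      (fun j => fireAt (spF n) m (SPNode.tvc j0) (SPNode.pqc j))
      (fun j => m (SPNode.pqc j)) j0
      (fun j hj => by simp [fireAt, pre_tvc, post_tvc, hj, Ne.symm hj])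
      (m (SPNode.pqc j0) + 1) (m (SPNode.pqc j0))
      (by simp [fireAt, pre_tvc, post_tvc]) rfl
    obtain ⟨S3, hU1, hU2⟩ := sum_eq_of_ne
      (fun j => ((fireAt (spF n) m (SPNode.tvc j0) (SPNode.pqc j) : ℕ) : ℤ))
      (fun j => ((m (SPNode.pqc j) : ℕ) : ℤ)) j0
      (fun j hj => by simp [fireAt, pre_tvc, post_tvc, hj, Ne.symm hj])
      ((m (SPNode.pqc j0) : ℤ) + 1) ((m (SPNode.pqc j0) : ℤ))
      (by show ((fireAt (spF n) m (SPNode.tvc j0) (SPNode.pqc j0) : ℕ) : ℤ)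
              = (m (SPNode.pqc j0) : ℤ) + 1
          rw [show fireAt (spF n) m (SPNode.tvc j0) (SPNode.pqc j0)
              = m (SPNode.pqc j0) + 1 from by simp [fireAt, pre_tvc, post_tvc]]
          push_cast; ring) rfl
    refine ⟨?_, fun j => ?_, ?_, ?_, ?_, ?_⟩
    · simp [fireAt, pre_tvc, post_tvc]; omega
    · have hj := h2 j
      by_cases hc : j = j0
      · subst hc; simp [fireAt, pre_tvc, post_tvc]; omega
      · simp [fireAt, pre_tvc, post_tvc, hc, Ne.symm hc]; omega
    · rw [hS1]; simp [fireAt, pre_tvc, post_tvc]; omega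
    · rw [hT1]; simp [fireAt, pre_tvc, post_tvc]; omega
    · simp [fireAt, pre_tvc, post_tvc]; omega
    · rw [hU1]; simp [fireAt, pre_tvc, post_tvc]; omega
  · -- twc j0
    have e1 : 1 ≤ m (SPNode.pqc j0) := hen _ ((pre_twc j0 _).mpr rfl)
    obtain ⟨S, hS1, hS2⟩ := sum_eq_of_ne
      (fun j => fireAt (spF n) m (SPNode.twc j0) (SPNode.pqc j))
      (fun j => m (SPNode.pqc j)) j0
      (fun j hj => by simp [fireAt, pre_twc, post_twc, hj, Ne.symm hj])
      (m (SPNode.pqc j0) - 1) (m (SPNode.pqc j0))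
      (by simp [fireAt, pre_twc, post_twc]) rfl
    obtain ⟨S3, hU1, hU2⟩ := sum_eq_of_ne
      (fun j => ((fireAt (spF n) m (SPNode.twc j0) (SPNode.pqc j) : ℕ) : ℤ))
      (fun j => ((m (SPNode.pqc j) : ℕ) : ℤ)) j0
      (fun j hj => by simp [fireAt, pre_twc, post_twc, hj, Ne.symm hj])
      ((m (SPNode.pqc j0) : ℤ) - 1) ((m (SPNode.pqc j0) : ℤ))
      (by show ((fireAt (spF n) m (SPNode.twc j0) (SPNode.pqc j0) : ℕ) : ℤ)
              = (m (SPNode.pqc j0) : ℤ) - 1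
          rw [show fireAt (spF n) m (SPNode.twc j0) (SPNode.pqc j0)
              = m (SPNode.pqc j0) - 1 from by simp [fireAt, pre_twc, post_twc]]
          omega) rfl
    refine ⟨?_, fun j => ?_, ?_, ?_, ?_, ?_⟩
    · simp [fireAt, pre_twc, post_twc]; omega
    · have hj := h2 j
      by_cases hc : j = j0
      · subst hc; simp [fireAt, pre_twc, post_twc]; omega
      · simp [fireAt, pre_twc, post_twc, hc, Ne.symm hc]; omega
    · simp [fireAt, pre_twc, post_twc]; omega
    · rw [hS1]; simp [fireAt, pre_twc, post_twc]; omega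
    · simp [fireAt, pre_twc, post_twc]; omega
    · rw [hU1]; simp [fireAt, pre_twc, post_twc]; omega
/-- A linear measure strictly decreasing under every firing. -/
def phi (n : ℕ) (m : SPNode n → ℕ) : ℕ :=
  4 * m SPNode.pp + 3 * m SPNode.pq + m SPNode.pr + 5 * m SPNode.pa1 + 5 * m SPNode.pa3 +
    ∑ j, (13 * m (SPNode.pic j) + 7 * m (SPNode.ppc j) + 6 * m (SPNode.pqc j))

lemma phi_fires {m m' : SPNode n → ℕ} {t : SPNode n}
    (hf : Fires (spT n) (spF n) m t m') : phi n m' < phi n m := by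
  obtain ⟨ht, hen, rfl⟩ := hf
  simp only [spT, Set.mem_setOf_eq] at ht
  rcases ht with rfl | rfl | rfl | rfl | ⟨j0, rfl | rfl | rfl⟩
  · have e1 : 1 ≤ m SPNode.pa1 := hen _ ((pre_tu _).mpr (Or.inr rfl))
    simp only [phi]; simp [fireAt, pre_tu, post_tu]; omega
  · have e1 : 1 ≤ m SPNode.pp := hen _ ((pre_tv _).mpr rfl)
    simp only [phi]; simp [fireAt, pre_tv, post_tv]; omega
  · have e1 : 1 ≤ m SPNode.pq := hen _ ((pre_tw _).mpr (Or.inl rfl))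
    have e2 : 1 ≤ m SPNode.pa3 := hen _ ((pre_tw _).mpr (Or.inr rfl))
    simp only [phi]; simp [fireAt, pre_tw, post_tw]; omega
  · have e1 : 1 ≤ m SPNode.pr := hen _ ((pre_tt _).mpr rfl)
    simp only [phi]; simp [fireAt, pre_tt, post_tt]; omega
  · have e1 : 1 ≤ m (SPNode.pic j0) := hen _ ((pre_tuc j0 _).mpr rfl)
    obtain ⟨S, hS1, hS2⟩ := sum_eq_of_ne
      (fun j => 13 * fireAt (spF n) m (SPNode.tuc j0) (SPNode.pic j)
        + 7 * fireAt (spF n) m (SPNode.tuc j0) (SPNode.ppc j)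
        + 6 * fireAt (spF n) m (SPNode.tuc j0) (SPNode.pqc j))
      (fun j => 13 * m (SPNode.pic j) + 7 * m (SPNode.ppc j) + 6 * m (SPNode.pqc j)) j0
      (fun j hj => by simp [fireAt, pre_tuc, post_tuc, hj, Ne.symm hj])
      (13 * (m (SPNode.pic j0) - 1) + 7 * (m (SPNode.ppc j0) + 1) + 6 * m (SPNode.pqc j0))
      (13 * m (SPNode.pic j0) + 7 * m (SPNode.ppc j0) + 6 * m (SPNode.pqc j0))
      (by simp [fireAt, pre_tuc, post_tuc]) rfl
    simp only [phi]; rw [hS1]; simp [fireAt, pre_tuc, post_tuc]; omega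
  · have e1 : 1 ≤ m (SPNode.ppc j0) := hen _ ((pre_tvc j0 _).mpr (Or.inl rfl))
    obtain ⟨S, hS1, hS2⟩ := sum_eq_of_ne
      (fun j => 13 * fireAt (spF n) m (SPNode.tvc j0) (SPNode.pic j)
        + 7 * fireAt (spF n) m (SPNode.tvc j0) (SPNode.ppc j)
        + 6 * fireAt (spF n) m (SPNode.tvc j0) (SPNode.pqc j))
      (fun j => 13 * m (SPNode.pic j) + 7 * m (SPNode.ppc j) + 6 * m (SPNode.pqc j)) j0
      (fun j hj => by simp [fireAt, pre_tvc, post_tvc, hj, Ne.symm hj])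
      (13 * m (SPNode.pic j0) + 7 * (m (SPNode.ppc j0) - 1) + 6 * (m (SPNode.pqc j0) + 1))
      (13 * m (SPNode.pic j0) + 7 * m (SPNode.ppc j0) + 6 * m (SPNode.pqc j0))
      (by simp [fireAt, pre_tvc, post_tvc]) rfl
    simp only [phi]; rw [hS1]; simp [fireAt, pre_tvc, post_tvc]; omega
  · have e1 : 1 ≤ m (SPNode.pqc j0) := hen _ ((pre_twc j0 _).mpr rfl)
    obtain ⟨S, hS1, hS2⟩ := sum_eq_of_ne
      (fun j => 13 * fireAt (spF n) m (SPNode.twc j0) (SPNode.pic j)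
        + 7 * fireAt (spF n) m (SPNode.twc j0) (SPNode.ppc j)
        + 6 * fireAt (spF n) m (SPNode.twc j0) (SPNode.pqc j))
      (fun j => 13 * m (SPNode.pic j) + 7 * m (SPNode.ppc j) + 6 * m (SPNode.pqc j)) j0
      (fun j hj => by simp [fireAt, pre_twc, post_twc, hj, Ne.symm hj])
      (13 * m (SPNode.pic j0) + 7 * m (SPNode.ppc j0) + 6 * (m (SPNode.pqc j0) - 1))
      (13 * m (SPNode.pic j0) + 7 * m (SPNode.ppc j0) + 6 * m (SPNode.pqc j0))
      (by simp [fireAt, pre_twc, post_twc]) rfl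
    simp only [phi]; rw [hS1]; simp [fireAt, pre_twc, post_twc]; omega


/-- Markings reachable from the initial marking carry no tokens on transition nodes. -/
def TZero (n : ℕ) (m : SPNode n → ℕ) : Prop :=
  m SPNode.tu = 0 ∧ m SPNode.tv = 0 ∧ m SPNode.tw = 0 ∧ m SPNode.tt = 0 ∧
    ∀ j : Fin n, m (SPNode.tuc j) = 0 ∧ m (SPNode.tvc j) = 0 ∧ m (SPNode.twc j) = 0

lemma not_trans_pair {a b : SPNode n} (ha : a ∈ spT n) (hb : b ∈ spT n) :
    (a, b) ∉ spF n := by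
  intro h
  simp only [spT, Set.mem_setOf_eq] at ha
  rcases ha with rfl | rfl | rfl | rfl | ⟨i, rfl | rfl | rfl⟩
  · rw [post_tu] at h; subst h; simp [spT] at hb
  · rw [post_tv] at h; rcases h with rfl | rfl <;> simp [spT] at hb
  · rw [post_tw] at h; subst h; simp [spT] at hb
  · rw [post_tt] at h; subst h; simp [spT] at hb
  · rw [post_tuc] at h; rcases h with rfl | rfl <;> simp [spT] at hb
  · rw [post_tvc] at h; subst h; simp [spT] at hb
  · rw [post_twc] at h; rcases h with rfl | rfl <;> simp [spT] at hb

lemma fireAt_trans {m : SPNode n → ℕ} {t x : SPNode n} (ht : t ∈ spT n) (hx : x ∈ spT n) :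
    fireAt (spF n) m t x = m x := by
  simp [fireAt, not_trans_pair hx ht, not_trans_pair ht hx]

lemma tzero_fires {m m' : SPNode n → ℕ} {t : SPNode n}
    (hf : Fires (spT n) (spF n) m t m') (hz : TZero n m) : TZero n m' := by
  obtain ⟨ht, -, rfl⟩ := hf
  obtain ⟨z1, z2, z3, z4, z5⟩ := hz
  refine ⟨?_, ?_, ?_, ?_, fun j => ⟨?_, ?_, ?_⟩⟩ <;>
    rw [fireAt_trans ht (by simp [spT])]
  · exact z1
  · exact z2
  · exact z3
  · exact z4
  · exact (z5 j).1
  · exact (z5 j).2.1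
  · exact (z5 j).2.2

lemma tzero_spM0 (n : ℕ) : TZero n (spM0 n) := by
  refine ⟨?_, ?_, ?_, ?_, fun j => ⟨?_, ?_, ?_⟩⟩ <;>
    simp [spM0, mark, Set.indicator_apply]

lemma tzero_fireSeq {m m' : SPNode n → ℕ} {σ : List (SPNode n)}
    (h : FireSeq (spT n) (spF n) m σ m') (hz : TZero n m) : TZero n m' := by
  induction h with
  | nil => exact hz
  | cons hf _ ih => exact ih (tzero_fires hf hz)

lemma progress {m : SPNode n → ℕ} (hI : SPInv n m) (hz : TZero n m) :
    m = spMf n ∨ ∃ t m', Fires (spT n) (spF n) m t m' := by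
  obtain ⟨h1, h2, h3, h4, h5, h6⟩ := hI
  have hcast : ((∑ j, m (SPNode.pqc j) : ℕ) : ℤ) = ∑ j, (m (SPNode.pqc j) : ℤ) := by
    push_cast; rfl
  by_cases hpp : 1 ≤ m SPNode.pp
  · right
    refine ⟨SPNode.tv, _, ⟨by simp [spT], ?_, rfl⟩⟩
    intro p hp; rw [pre_tv] at hp; subst hp; exact hpp
  by_cases hpr : 1 ≤ m SPNode.pr
  · right
    refine ⟨SPNode.tt, _, ⟨by simp [spT], ?_, rfl⟩⟩
    intro p hp; rw [pre_tt] at hp; subst hp; exact hpr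
  by_cases hic : ∃ j, 1 ≤ m (SPNode.pic j)
  · right
    obtain ⟨j, hj⟩ := hic
    refine ⟨SPNode.tuc j, _, ⟨by simp [spT], ?_, rfl⟩⟩
    intro p hp; rw [pre_tuc] at hp; subst hp; exact hj
  by_cases hqc : ∃ j, 1 ≤ m (SPNode.pqc j)
  · right
    obtain ⟨j, hj⟩ := hqc
    refine ⟨SPNode.twc j, _, ⟨by simp [spT], ?_, rfl⟩⟩
    intro p hp; rw [pre_twc] at hp; subst hp; exact hj
  by_cases hw : 1 ≤ m SPNode.pq ∧ 1 ≤ m SPNode.pa3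
  · right
    refine ⟨SPNode.tw, _, ⟨by simp [spT], ?_, rfl⟩⟩
    intro p hp; rw [pre_tw] at hp; rcases hp with rfl | rfl
    exacts [hw.1, hw.2]
  by_cases hu : 1 ≤ m SPNode.pi ∧ 1 ≤ m SPNode.pa1
  · right
    refine ⟨SPNode.tu, _, ⟨by simp [spT], ?_, rfl⟩⟩
    intro p hp; rw [pre_tu] at hp; rcases hp with rfl | rfl
    exacts [hu.1, hu.2]
  by_cases hv : 1 ≤ m SPNode.pa2 ∧ ∃ j, 1 ≤ m (SPNode.ppc j)
  · right
    obtain ⟨ha2, j, hj⟩ := hv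
    refine ⟨SPNode.tvc j, _, ⟨by simp [spT], ?_, rfl⟩⟩
    intro p hp; rw [pre_tvc] at hp; rcases hp with rfl | rfl
    exacts [hj, ha2]
  -- deadlock: the marking must be the final marking
  left
  push_neg at hic hqc hw hu hv
  have hq0 : ∀ j, m (SPNode.pqc j) = 0 := fun j => by have := hqc j; omega
  have hSq : (∑ j, m (SPNode.pqc j)) = 0 := Finset.sum_eq_zero fun j _ => hq0 j
  have ha23 : m SPNode.pa2 + m SPNode.pa3 = m SPNode.pq := by omega
  by_cases hq : 1 ≤ m SPNode.pq
  · exfalso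
    have ha3 : m SPNode.pa3 = 0 := by have := hw hq; omega
    have ha2 : 1 ≤ m SPNode.pa2 := by omega
    have hppos : 1 ≤ ∑ j, m (SPNode.ppc j) := by omega
    have hex : ∃ j, 1 ≤ m (SPNode.ppc j) := by
      by_contra hcon
      push_neg at hcon
      have : (∑ j, m (SPNode.ppc j)) = 0 :=
        Finset.sum_eq_zero fun j _ => by have := hcon j; omega
      omega
    obtain ⟨j, hj⟩ := hex
    have := hv ha2 j
    omega
  · have hpi : m SPNode.pi = 1 := by omega
    have ha2 : m SPNode.pa2 = 0 := by omega
    have ha3 : m SPNode.pa3 = 0 := by omega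
    have ha1 : m SPNode.pa1 = 0 := by have := hu (by omega); omega
    have hSp : (∑ j, m (SPNode.ppc j)) = 0 := by omega
    have hppc : ∀ j, m (SPNode.ppc j) = 0 := fun j =>
      (Finset.sum_eq_zero_iff.1 hSp) j (Finset.mem_univ j)
    have hprc : ∀ j, m (SPNode.prc j) = 1 := fun j => by
      have := h2 j; have := hic j; have := hq0 j; have := hppc j; omega
    funext x
    cases x with
    | pi => simp [spMf, mark, Set.indicator_apply]; omega
    | pp => simp [spMf, mark, Set.indicator_apply]; omega
    | pq => simp [spMf, mark, Set.indicator_apply]; omega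
    | pr => simp [spMf, mark, Set.indicator_apply]; omega
    | pa1 => simp [spMf, mark, Set.indicator_apply]; omega
    | pa2 => simp [spMf, mark, Set.indicator_apply]; omega
    | pa3 => simp [spMf, mark, Set.indicator_apply]; omega
    | pic j => have := hic j; simp [spMf, mark, Set.indicator_apply]; omega
    | ppc j => have := hppc j; simp [spMf, mark, Set.indicator_apply]; omega
    | pqc j => have := hq0 j; simp [spMf, mark, Set.indicator_apply]; omega
    | prc j => have := hprc j; simp [spMf, mark, Set.indicator_apply]; omega
    | tu => have := hz.1; simp [spMf, mark, Set.indicator_apply]; omega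
    | tv => have := hz.2.1; simp [spMf, mark, Set.indicator_apply]; omega
    | tw => have := hz.2.2.1; simp [spMf, mark, Set.indicator_apply]; omega
    | tt => have := hz.2.2.2.1; simp [spMf, mark, Set.indicator_apply]; omega
    | tuc j => have := (hz.2.2.2.2 j).1; simp [spMf, mark, Set.indicator_apply]; omega
    | tvc j => have := (hz.2.2.2.2 j).2.1; simp [spMf, mark, Set.indicator_apply]; omega
    | twc j => have := (hz.2.2.2.2 j).2.2; simp [spMf, mark, Set.indicator_apply]; omega

lemma inv_spM0 (n : ℕ) : SPInv n (spM0 n) := by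
  refine ⟨?_, fun j => ?_, ?_, ?_, ?_, ?_⟩ <;>
    simp [spM0, mark, Set.indicator_apply]

lemma inv_fireSeq {m m' : SPNode n → ℕ} {σ : List (SPNode n)}
    (h : FireSeq (spT n) (spF n) m σ m') (hI : SPInv n m) : SPInv n m' := by
  induction h with
  | nil => exact hI
  | cons hf _ ih => exact ih (inv_fires hf hI)

lemma reach_mf_of_inv {m : SPNode n → ℕ} (hI : SPInv n m) (hz : TZero n m) :
    Reach (spT n) (spF n) m (spMf n) := by
  suffices H : ∀ (k : ℕ) (m : SPNode n → ℕ), phi n m = k → SPInv n m → TZero n m →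
      Reach (spT n) (spF n) m (spMf n) from H (phi n m) m rfl hI hz
  intro k
  induction k using Nat.strong_induction_on with
  | _ k IH =>
    intro m hk hI hz
    rcases progress hI hz with heq | ⟨t, m', hf⟩
    · subst heq
      exact ⟨[], FireSeq.nil _⟩
    · obtain ⟨σ, hσ⟩ := IH (phi n m') (by have := phi_fires hf; omega) m' rfl
        (inv_fires hf hI) (tzero_fires hf hz)
      exact ⟨t :: σ, FireSeq.cons hf hσ⟩

/-- the net system of the synchronization pattern with `n` clients weakly
terminates: from every marking reachable from the initial marking `{i} + Σ_j {i_j}`,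
the final marking `{i} + Σ_j {r_j}` is reachable. -/
theorem sp_weakly_terminates (n : ℕ) :
    WeaklyTerminates (spT n) (spF n) (spM0 n) (spMf n) := by
  intro m hm
  obtain ⟨σ, hσ⟩ := hm
  exact reach_mf_of_inv (inv_fireSeq hσ (inv_spM0 n)) (tzero_fireSeq hσ (tzero_spM0 n))

end PortNets
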